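/- Let F be a field and q ∈ F with q ≠ 0. For integers k ≤ n ≤ −1 define the generalized Gaussian coefficient G(n,k) := (−1)^{n−k} · h_{n−k}(q^{−1}, q^{−2}, …, q^{n}) (the complete homogeneous symmetric function of degree n−k in the −n variables q^{−1}, q^{−2}, …, q^{n}), and set G(n,k) := 0 when k > n. Then for all integers k ≤ n ≤ −1, G(n, k) = G(n−1, k−1) + q^{n−1} · G(n−1, k). -/

import Mathlib

/-- `h_n(B)`: the complete homogeneous symmetric function of degree `n` in the
elements of the multiset `B`, defined as the coefficient of `t^n` in
`∏_{b ∈ B} (1 + b t + b² t² + ⋯) = ∏_{b ∈ B} 1/(1 - b t)`. -/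
noncomputable def hsymmM {R : Type*} [CommRing R] (B : Multiset R) (n : ℕ) : R :=
  PowerSeries.coeff (R := R) n ((B.map fun b => PowerSeries.mk fun k => b ^ k).prod)

/-- `e_k(A)`: the elementary symmetric function of degree `k` in the elements of
the multiset `A`. -/
def esymmM {R : Type*} [CommRing R] (A : Multiset R) (k : ℕ) : R :=
  ((A.powersetCard k).map Multiset.prod).sum

/-- The complementary symmetric function `comp_n(A;B) = ∑_{j=0}^n (-1)^j e_j(A) h_{n-j}(B)`. -/
noncomputable def compM {R : Type*} [CommRing R] (A B : Multiset R) (n : ℕ) : R :=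
  ∑ j ∈ Finset.range (n + 1), (-1 : R) ^ j * esymmM A j * hsymmM B (n - j)


/-- The generalized Gaussian coefficient in region 3: for `k ≤ n ≤ -1`,
`G(n,k) = (-1)^{n-k} h_{n-k}(q^{-1}, q^{-2}, …, q^{n})` (a complete homogeneous symmetric
function in the `-n` variables `q^{-1}, …, q^{n}`), and `G(n,k) = 0` for `k > n`. -/
noncomputable def Gq {F : Type*} [Field F] (q : F) (n k : ℤ) : F :=
  if k ≤ n then
    (-1) ^ (n - k).toNat *
      hsymmM ((Multiset.range (-n).toNat).map fun j => q ^ (-(j : ℤ) - 1)) (n - k).toNat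
  else 0


lemma geom_eq {R : Type*} [CommRing R] (a : R) :
    (PowerSeries.mk fun k => a ^ k)
      = 1 + PowerSeries.C a * PowerSeries.X * PowerSeries.mk fun k => a ^ k := by
  ext k
  cases k with
  | zero => simp
  | succ m =>
      rw [map_add, mul_assoc, PowerSeries.coeff_C_mul, PowerSeries.coeff_succ_X_mul]
      simp [pow_succ, mul_comm]

lemma hsymmM_cons {R : Type*} [CommRing R] (a : R) (B : Multiset R) (m : ℕ) :
    hsymmM (a ::ₘ B) (m + 1) = hsymmM B (m + 1) + a * hsymmM (a ::ₘ B) m := by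
  unfold hsymmM
  rw [Multiset.map_cons, Multiset.prod_cons]
  conv_lhs => rw [geom_eq a, add_mul, one_mul, map_add]
  rw [mul_assoc, mul_assoc, PowerSeries.coeff_C_mul, PowerSeries.coeff_succ_X_mul]

lemma hsymmM_zero {R : Type*} [CommRing R] (B : Multiset R) : hsymmM B 0 = 1 := by
  simp only [hsymmM, PowerSeries.coeff_zero_eq_constantCoeff, map_multiset_prod,
    Multiset.map_map]
  have h : ∀ b : R, PowerSeries.constantCoeff (R := R) (PowerSeries.mk fun k => b ^ k) = 1 := by
    intro b; simp
  simp [Function.comp, h]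

/-- The Gaussian recursion `G(n,k) = G(n-1,k-1) + q^{n-1} G(n-1,k)` in region 3. -/
theorem stmt16 {F : Type*} [Field F] (q : F) (hq : q ≠ 0) (n k : ℤ)
    (hk : k ≤ n) (hn : n ≤ -1) :
    Gq q n k = Gq q (n - 1) (k - 1) + q ^ (n - 1) * Gq q (n - 1) k := by
  have hbind : ∀ (s : Multiset ℕ),
      (s >>= fun a => (pure (a : ℤ) : Multiset ℤ)) = Multiset.map (Nat.cast : ℕ → ℤ) s :=
    fun s => Multiset.bind_singleton s _
  have hmul : ((Multiset.range (-(n-1)).toNat).map fun j => q ^ (-(j : ℤ) - 1))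
      = q ^ (n-1) ::ₘ ((Multiset.range (-n).toNat).map fun j => q ^ (-(j : ℤ) - 1)) := by
    have h1 : (-(n-1)).toNat = (-n).toNat + 1 := by omega
    simp only [hbind, Multiset.map_map]
    rw [h1, Multiset.range_succ, Multiset.map_cons]
    have h2 : (-(((-n).toNat : ℕ) : ℤ) - 1) = n - 1 := by omega
    simp only [Function.comp_apply, h2]
  rcases eq_or_lt_of_le hk with heq | hlt
  · subst heq
    simp only [Gq]
    rw [if_pos le_rfl, if_pos (le_refl (k - 1)), if_neg (by omega : ¬ k ≤ k - 1)]
    simp [hsymmM_zero]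
  · obtain ⟨mm, hmm⟩ : ∃ mm, (n - k).toNat = mm + 1 := ⟨(n-k).toNat - 1, by omega⟩
    simp only [Gq]
    rw [if_pos hk, if_pos (by omega : k - 1 ≤ n - 1), if_pos (by omega : k ≤ n - 1)]
    have e1 : (n - 1 - (k - 1)).toNat = mm + 1 := by omega
    have e2 : (n - 1 - k).toNat = mm := by omega
    rw [hmm, e1, e2, hmul, hsymmM_cons]
    ring
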